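/- Assume f : [0,1] → ℝ is continuous and strictly increasing (so f(0) is finite). A probability distribution p* on a finite set A satisfies the variational principle with parameters θ ∈ ℝ^n if and only if there exist α ∈ ℝ and a subset A_0 ⊆ A such that: (i) f(p*_a) = -α - Σ_j θ_j H_j(a) for all a ∉ A_0; (ii) p*_a = 0 for all a ∈ A_0; and (iii) f(0) + Σ_j θ_j H_j(a) ≥ -α for all a ∈ A_0. -/

import Mathlib

open Set

private lemma aux_integral_ge (f : ℝ → ℝ) (hfc : ContinuousOn f (Icc 0 1))
    (hfm : MonotoneOn f (Icc 0 1)) {x y : ℝ} (hx : x ∈ Icc (0:ℝ) 1) (hy : y ∈ Icc (0:ℝ) 1) :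
    f x * (y - x) ≤ ∫ v in x..y, f v := by
  have hsub : uIcc x y ⊆ Icc 0 1 := uIcc_subset_Icc hx hy
  have hint : IntervalIntegrable f MeasureTheory.volume x y :=
    (hfc.mono hsub).intervalIntegrable
  rcases le_total x y with hxy | hxy
  · have := intervalIntegral.integral_mono_on hxy (_root_.intervalIntegrable_const (c := f x)) hint
      (fun t ht => hfm hx (hsub (by rw [uIcc_of_le hxy]; exact ht)) ht.1)
    rw [intervalIntegral.integral_const, smul_eq_mul] at this
    linarith
  · rw [intervalIntegral.integral_symm]
    have := intervalIntegral.integral_mono_on hxy hint.symm (_root_.intervalIntegrable_const (c := f x))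
      (fun t ht => hfm (hsub (by rw [uIcc_of_ge hxy]; exact ht)) hx ht.2)
    rw [intervalIntegral.integral_const, smul_eq_mul] at this
    linarith

private lemma aux_hdiff (f : ℝ → ℝ) (hfc : ContinuousOn f (Icc 0 1))
    (h : ℝ → ℝ) (hh : ∀ u, h u = -∫ v in (0:ℝ)..u, f v)
    {x y : ℝ} (hx : x ∈ Icc (0:ℝ) 1) (hy : y ∈ Icc (0:ℝ) 1) :
    h y - h x = -(∫ v in x..y, f v) := by
  have h0 : (0:ℝ) ∈ Icc (0:ℝ) 1 := by constructor <;> norm_num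
  have i1 : IntervalIntegrable f MeasureTheory.volume 0 x :=
    (hfc.mono (uIcc_subset_Icc h0 hx)).intervalIntegrable
  have i2 : IntervalIntegrable f MeasureTheory.volume x y :=
    (hfc.mono (uIcc_subset_Icc hx hy)).intervalIntegrable
  have := intervalIntegral.integral_add_adjacent_intervals i1 i2
  rw [hh, hh]
  linarith

/-- Characterisation of the variational principle, case with cutoff (`f(0)` finite):
for `f` continuous and strictly increasing on `[0,1]`, entropy `I(p) = Σ_a h(p_a)`
with `h(u) = -∫_0^u f`, a probability distribution `p⋆` satisfies the variational
principle with parameters `θ` iff there exist `α` and a subset `A₀ ⊆ A` such that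
(i) `f(p⋆_a) = -α - Σ_j θ_j H_j(a)` for `a ∉ A₀`, (ii) `p⋆_a = 0` for `a ∈ A₀`, and
(iii) `f(0) + Σ_j θ_j H_j(a) ≥ -α` for `a ∈ A₀`. -/
theorem stmt_5 {A : Type*} [Fintype A]
    {n : ℕ} (H : Fin n → A → ℝ) (θ : Fin n → ℝ)
    (f : ℝ → ℝ)
    (hfc : ContinuousOn f (Icc 0 1)) (hfm : StrictMonoOn f (Icc 0 1))
    (h : ℝ → ℝ) (hh : ∀ u, h u = -∫ v in (0:ℝ)..u, f v)
    (pstar : A → ℝ) (hp0 : ∀ a, 0 ≤ pstar a) (hpsum : ∑ a, pstar a = 1) :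
    (∀ p : A → ℝ, (∀ a, 0 ≤ p a) → ∑ a, p a = 1 →
      (∑ a, h (p a)) - ∑ j, θ j * ∑ a, p a * H j a ≤
        (∑ a, h (pstar a)) - ∑ j, θ j * ∑ a, pstar a * H j a) ↔
    (∃ (α : ℝ) (A₀ : Finset A),
      (∀ a ∉ A₀, f (pstar a) = -α - ∑ j, θ j * H j a) ∧
      (∀ a ∈ A₀, pstar a = 0) ∧
      (∀ a ∈ A₀, -α ≤ f 0 + ∑ j, θ j * H j a)) := by
  classical
  set C : A → ℝ := fun a => ∑ j, θ j * H j a with hC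
  have hrw : ∀ p : A → ℝ, ∑ j, θ j * ∑ a, p a * H j a = ∑ a, p a * C a := by
    intro p
    simp_rw [Finset.mul_sum]
    rw [Finset.sum_comm]
    exact Finset.sum_congr rfl fun a _ => by rw [Finset.mul_sum]; exact Finset.sum_congr rfl fun j _ => by ring
  -- membership facts
  have hmem : ∀ (p : A → ℝ), (∀ a, 0 ≤ p a) → ∑ a, p a = 1 → ∀ a, p a ∈ Icc (0:ℝ) 1 := by
    intro p hp hps a
    refine ⟨hp a, ?_⟩
    rw [← hps]
    exact Finset.single_le_sum (fun b _ => hp b) (Finset.mem_univ a)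
  have hstarmem : ∀ a, pstar a ∈ Icc (0:ℝ) 1 := hmem pstar hp0 hpsum
  -- gradient inequality for h
  have grad : ∀ x ∈ Icc (0:ℝ) 1, ∀ y ∈ Icc (0:ℝ) 1, h y ≤ h x - f x * (y - x) := by
    intro x hx y hy
    have h1 := aux_hdiff f hfc h hh hx hy
    have h2 := aux_integral_ge f hfc hfm.monotoneOn hx hy
    linarith
  constructor
  · -- forward direction
    intro hmax
    -- restate maximality
    have hmax' : ∀ p : A → ℝ, (∀ a, 0 ≤ p a) → ∑ a, p a = 1 →
        ∑ a, (h (p a) - p a * C a) ≤ ∑ a, (h (pstar a) - pstar a * C a) := by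
      intro p hp hps
      have := hmax p hp hps
      rw [hrw p, hrw pstar] at this
      simpa [Finset.sum_sub_distrib] using this
    -- perturbation inequality
    have pert : ∀ a b : A, a ≠ b → 0 < pstar a →
        f (pstar a) + C a ≤ f (pstar b) + C b := by
      intro a b hab hpa
      have hsplit : ∀ (g : A → ℝ), ∑ x, g x = g a + g b + ∑ x ∈ Finset.univ \ {a, b}, g x := by
        intro g
        rw [← Finset.sum_sdiff (Finset.subset_univ {a, b}), Finset.sum_pair hab]
        ring
      have habsum : pstar a + pstar b ≤ 1 := by
        rw [← hpsum, hsplit pstar]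
        have : 0 ≤ ∑ x ∈ Finset.univ \ {a, b}, pstar x :=
          Finset.sum_nonneg fun x _ => hp0 x
        linarith
      -- the step inequality
      have hstep : ∀ t : ℝ, 0 < t → t ≤ pstar a →
          f (pstar a - t) + C a ≤ f (pstar b + t) + C b := by
        intro t ht htle
        set p : A → ℝ := fun x => if x = a then pstar a - t else if x = b then pstar b + t else pstar x with hp
        have hpa' : p a = pstar a - t := by simp [hp]
        have hpb' : p b = pstar b + t := by simp [hp, hab.symm]
        have hpother : ∀ x ∈ Finset.univ \ {a, b}, p x = pstar x := by
          intro x hx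
          simp only [Finset.mem_sdiff, Finset.mem_insert, Finset.mem_singleton] at hx
          push_neg at hx
          simp [hp, hx.2.1, hx.2.2]
        have hpnn : ∀ x, 0 ≤ p x := by
          intro x
          by_cases hxa : x = a
          · rw [hxa, hpa']; linarith
          · by_cases hxb : x = b
            · rw [hxb, hpb']; have := hp0 b; linarith
            · simp [hp, hxa, hxb]; exact hp0 x
        have hpsum' : ∑ x, p x = 1 := by
          rw [hsplit p, hpa', hpb', Finset.sum_congr rfl hpother]
          rw [hsplit pstar] at hpsum
          linarith
        have hineq := hmax' p hpnn hpsum'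
        rw [hsplit (fun x => h (p x) - p x * C x), hsplit (fun x => h (pstar x) - pstar x * C x)] at hineq
        have hcong : ∑ x ∈ Finset.univ \ {a, b}, (h (p x) - p x * C x)
            = ∑ x ∈ Finset.univ \ {a, b}, (h (pstar x) - pstar x * C x) :=
          Finset.sum_congr rfl fun x hx => by rw [hpother x hx]
        rw [hcong, hpa', hpb'] at hineq
        -- memberships
        have hma : pstar a - t ∈ Icc (0:ℝ) 1 := ⟨by linarith, by have := (hstarmem a).2; linarith⟩
        have hmb : pstar b + t ∈ Icc (0:ℝ) 1 := ⟨by have := hp0 b; linarith, by linarith⟩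
        -- integral identities
        have e1 : h (pstar a) - h (pstar a - t) = -(∫ v in (pstar a - t)..(pstar a), f v) :=
          aux_hdiff f hfc h hh hma (hstarmem a)
        have e2 : h (pstar b + t) - h (pstar b) = -(∫ v in (pstar b)..(pstar b + t), f v) :=
          aux_hdiff f hfc h hh (hstarmem b) hmb
        have b1 : f (pstar a - t) * t ≤ ∫ v in (pstar a - t)..(pstar a), f v := by
          have := aux_integral_ge f hfc hfm.monotoneOn hma (hstarmem a)
          have he : pstar a - (pstar a - t) = t := by ring
          rwa [he] at this
        have b2 : (∫ v in (pstar b)..(pstar b + t), f v) ≤ f (pstar b + t) * t := by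
          have := aux_integral_ge f hfc hfm.monotoneOn hmb (hstarmem b)
          rw [intervalIntegral.integral_symm] at this
          have he : pstar b - (pstar b + t) = -t := by ring
          rw [he] at this
          linarith
        have : (f (pstar a - t) + C a) * t ≤ (f (pstar b + t) + C b) * t := by nlinarith
        exact le_of_mul_le_mul_right this ht
      -- take the limit t → 0+
      have hta : Filter.Tendsto (fun t : ℝ => f (pstar a - t)) (nhdsWithin 0 (Ioi 0)) (nhds (f (pstar a))) := by
        apply (hfc (pstar a) (hstarmem a)).tendsto.comp
        rw [tendsto_nhdsWithin_iff]
        constructor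
        · have : Filter.Tendsto (fun t : ℝ => pstar a - t) (nhds 0) (nhds (pstar a - 0)) :=
            (continuous_const.sub continuous_id).tendsto 0
          rw [sub_zero] at this
          exact this.mono_left nhdsWithin_le_nhds
        · filter_upwards [Ioc_mem_nhdsGT hpa] with t ht
          exact ⟨by linarith [ht.2], by have := (hstarmem a).2; linarith [ht.1]⟩
      have htb : Filter.Tendsto (fun t : ℝ => f (pstar b + t)) (nhdsWithin 0 (Ioi 0)) (nhds (f (pstar b))) := by
        apply (hfc (pstar b) (hstarmem b)).tendsto.comp
        rw [tendsto_nhdsWithin_iff]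
        constructor
        · have : Filter.Tendsto (fun t : ℝ => pstar b + t) (nhds 0) (nhds (pstar b + 0)) :=
            (continuous_const.add continuous_id).tendsto 0
          rw [add_zero] at this
          exact this.mono_left nhdsWithin_le_nhds
        · filter_upwards [Ioc_mem_nhdsGT hpa] with t ht
          exact ⟨by have := hp0 b; linarith [ht.1], by linarith [ht.2]⟩
      have hlim : Filter.Tendsto (fun t : ℝ => f (pstar b + t) + C b - (f (pstar a - t) + C a))
          (nhdsWithin 0 (Ioi 0)) (nhds (f (pstar b) + C b - (f (pstar a) + C a))) := by
        exact ((htb.add tendsto_const_nhds).sub (hta.add tendsto_const_nhds))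
      have hge : 0 ≤ f (pstar b) + C b - (f (pstar a) + C a) := by
        refine ge_of_tendsto hlim ?_
        filter_upwards [Ioc_mem_nhdsGT hpa] with t ht
        have := hstep t ht.1 ht.2
        linarith
      linarith
    -- pick a₀ with positive mass
    obtain ⟨a₀, ha₀⟩ : ∃ a, 0 < pstar a := by
      by_contra hcon
      push_neg at hcon
      have : ∀ a, pstar a = 0 := fun a => le_antisymm (hcon a) (hp0 a)
      simp [this] at hpsum
    have pert' : ∀ b, f (pstar a₀) + C a₀ ≤ f (pstar b) + C b := by
      intro b
      by_cases hb : b = a₀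
      · rw [hb]
      · exact pert a₀ b (fun hx => hb hx.symm) ha₀
    refine ⟨-(f (pstar a₀) + C a₀), Finset.univ.filter (fun x => ¬ f (pstar x) = -(-(f (pstar a₀) + C a₀)) - C x), ?_, ?_, ?_⟩
    · intro a ha
      simp only [Finset.mem_filter, Finset.mem_univ, true_and, not_not] at ha
      exact ha
    · intro a ha
      simp only [Finset.mem_filter, Finset.mem_univ, true_and] at ha
      by_contra hne
      have hpos : 0 < pstar a := lt_of_le_of_ne (hp0 a) (Ne.symm hne)
      have h1 : f (pstar a) + C a ≤ f (pstar a₀) + C a₀ := by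
        by_cases hb : a = a₀
        · rw [hb]
        · exact pert a a₀ hb hpos
      have h2 := pert' a
      exact ha (by linarith)
    · intro a ha
      simp only [Finset.mem_filter, Finset.mem_univ, true_and] at ha
      have hz : pstar a = 0 := by
        by_contra hne
        have hpos : 0 < pstar a := lt_of_le_of_ne (hp0 a) (Ne.symm hne)
        have h1 : f (pstar a) + C a ≤ f (pstar a₀) + C a₀ := by
          by_cases hb : a = a₀
          · rw [hb]
          · exact pert a a₀ hb hpos
        exact ha (by linarith [pert' a])
      have := pert' a
      rw [hz] at this
      linarith
  · -- backward direction
    rintro ⟨α, A₀, h1, h2, h3⟩ p hp hps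
    rw [hrw p, hrw pstar]
    have key : ∀ a, h (p a) - p a * C a ≤ h (pstar a) - pstar a * C a + α * (p a - pstar a) := by
      intro a
      have hg := grad (pstar a) (hstarmem a) (p a) (hmem p hp hps a)
      by_cases ha : a ∈ A₀
      · have hz := h2 a ha
        have h3' : -α ≤ f 0 + C a := h3 a ha
        rw [hz] at hg ⊢
        nlinarith [mul_nonneg (show (0:ℝ) ≤ α + (f 0 + C a) by linarith) (hp a), hp a]
      · have he : f (pstar a) = -α - C a := h1 a ha
        rw [he] at hg
        nlinarith [hg]
    have hsum : ∑ a, (h (p a) - p a * C a) ≤ ∑ a, (h (pstar a) - pstar a * C a + α * (p a - pstar a)) :=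
      Finset.sum_le_sum (fun a _ => key a)
    simp only [Finset.sum_add_distrib, Finset.sum_sub_distrib, ← Finset.mul_sum] at hsum
    rw [hps, hpsum] at hsum
    simp at hsum
    linarith
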